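/- In the metacyclic group G = ⟨x, y | y^n = 1, x^k = y^ℓ, y x = x y^s⟩, any product of a contiguous block of the sequence (y^{n-1} x)^{k-1} y^{n-1} has the form x^u y^v with either u ∈ [1, k-1], or u = 0 and v ∈ [1, n-1]; in particular, it is never the identity. -/
import Mathlib


/-- A list `S` over a monoid has a nonempty consecutive product-one subsequence. -/
def ConsecOne {G : Type*} [Monoid G] (S : List G) : Prop :=
  ∃ T : List G, T ≠ [] ∧ T <:+: S ∧ T.prod = 1

/-- The consecutive Davenport constant `C(G)`. -/
noncomputable def CDav (G : Type*) [Monoid G] : ℕ :=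
  sInf {ℓ : ℕ | ∀ S : List G, ℓ ≤ S.length → ConsecOne S}

/-- A list `S` over a monoid has a nonempty `A`-weighted consecutive product-one subsequence. -/
def WConsecOne {G : Type*} [Monoid G] (A : Set ℕ) (S : List G) : Prop :=
  ∃ T : List (G × ℕ), T ≠ [] ∧ T.map Prod.fst <:+: S ∧ (∀ p ∈ T, p.2 ∈ A) ∧
    (T.map fun p => p.1 ^ p.2).prod = 1

/-- The `A`-weighted consecutive Davenport constant `C_A(G)`. -/
noncomputable def CDavA (A : Set ℕ) (G : Type*) [Monoid G] : ℕ :=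
  sInf {ℓ : ℕ | ∀ S : List G, ℓ ≤ S.length → WConsecOne A S}

section Aux
variable {G : Type*} [Group G]

lemma push1 (x y : G) (s : ℕ) (h : y * x = x * y ^ s) (a : ℕ) :
    y ^ a * x = x * y ^ (a * s) := by
  induction a with
  | zero => simp
  | succ a ih =>
    have h1 : y ^ (a + 1) * x = y ^ a * (y * x) := by rw [pow_succ, mul_assoc]
    rw [h1, h, ← mul_assoc, ih, mul_assoc, ← pow_add, add_mul, one_mul]

lemma pushu (x y : G) (s : ℕ) (h : y * x = x * y ^ s) (a u : ℕ) :
    y ^ a * x ^ u = x ^ u * y ^ (a * s ^ u) := by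
  induction u generalizing a with
  | zero => simp
  | succ u ih =>
    calc y ^ a * x ^ (u+1) = (y ^ a * x ^ u) * x := by rw [pow_succ, mul_assoc]
      _ = x ^ u * y ^ (a * s ^ u) * x := by rw [ih a]
      _ = x ^ u * (x * y ^ (a * s ^ u * s)) := by rw [mul_assoc, push1 x y s h]
      _ = x ^ (u+1) * y ^ (a * s ^ (u+1)) := by
          rw [← mul_assoc, ← pow_succ, mul_assoc a, ← pow_succ]

def Efun (n s : ℕ) : ℕ → ℕ
  | 0 => 0
  | q+1 => (Efun n s q + (n-1)) * s

lemma blockpow (x y : G) (n s : ℕ) (h : y * x = x * y ^ s) (q : ℕ) :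
    (y ^ (n-1) * x) ^ q = x ^ q * y ^ (Efun n s q) := by
  induction q with
  | zero => simp [Efun]
  | succ q ih =>
    rw [pow_succ, ih, mul_assoc, ← mul_assoc (y ^ Efun n s q), ← pow_add,
      push1 x y s h, ← mul_assoc, ← pow_succ]
    rfl

lemma take_lem {α : Type*} (x y : α) (n : ℕ) (hn : 0 < n) :
    ∀ (j m : ℕ), m ≤ j * n + (n - 1) →
      ((List.replicate j (List.replicate (n-1) y ++ [x])).flatten ++ List.replicate (n-1) y).take m
        = (List.replicate (m / n) (List.replicate (n-1) y ++ [x])).flatten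
            ++ List.replicate (m % n) y := by
  intro j
  induction j with
  | zero =>
    intro m hm
    simp only [Nat.zero_mul, Nat.zero_add] at hm
    have h1 : m < n := lt_of_le_of_lt hm (Nat.sub_lt hn one_pos)
    rw [Nat.div_eq_of_lt h1, Nat.mod_eq_of_lt h1]
    simp [List.take_replicate, Nat.min_eq_left hm]
  | succ j ih =>
    intro m hm
    have hlen : (List.replicate (n-1) y ++ [x]).length = n := by
      simp [Nat.sub_add_cancel hn]
    rw [List.replicate_succ, List.flatten_cons, List.append_assoc,
      List.take_append, hlen]
    rcases lt_or_ge m n with hmn | hmn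
    · rw [Nat.div_eq_of_lt hmn, Nat.mod_eq_of_lt hmn, Nat.sub_eq_zero_of_le (le_of_lt hmn)]
      have hm1 : m ≤ n - 1 := Nat.le_sub_one_of_lt hmn
      rw [List.take_append, List.take_replicate, List.length_replicate,
        Nat.min_eq_left hm1, Nat.sub_eq_zero_of_le hm1]
      simp
    · rw [Nat.succ_mul] at hm
      have h2 : m - n ≤ j * n + (n - 1) := by omega
      have h3 : (List.replicate (n-1) y ++ [x]).length ≤ m := by rw [hlen]; exact hmn
      rw [List.take_of_length_le h3, ih (m - n) h2, Nat.div_eq_sub_div hn hmn,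
        Nat.mod_eq_sub_mod hmn, List.replicate_succ, List.flatten_cons]
      simp [List.append_assoc]

lemma prefix_prod (n s : ℕ) (hn : 0 < n) (x y : G) (h : y * x = x * y ^ s)
    (j m : ℕ) (hm : m ≤ j * n + (n-1)) :
    ((((List.replicate j (List.replicate (n-1) y ++ [x])).flatten
        ++ List.replicate (n-1) y).take m)).prod
      = x ^ (m / n) * y ^ (Efun n s (m / n) + m % n) := by
  rw [take_lem x y n hn j m hm, List.prod_append, List.prod_replicate, List.prod_flatten,
    List.map_replicate, List.prod_replicate, List.prod_append, List.prod_replicate,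
    List.prod_singleton, blockpow x y n s h, pow_add, mul_assoc]

end Aux

/-- In the metacyclic group `G = ⟨x, y | yⁿ = 1, xᵏ = yˡ, yx = xyˢ⟩`, every product of a
nonempty contiguous block of the sequence `(y^[n-1] x)^[k-1] y^[n-1]` has the form `xᵘ yᵛ`
with `u ∈ [1, k-1]`, or `u = 0` and `v ∈ [1, n-1]`; in particular it is never `1`. -/
theorem stmt6 {G : Type*} [Group G] [Fintype G] (n k l s : ℕ) (hn : 0 < n) (hk : 0 < k)
    (x y : G) (hy : y ^ n = 1) (hx : x ^ k = y ^ l) (hyx : y * x = x * y ^ s)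
    (hd1 : (n : ℤ) ∣ (s : ℤ) ^ k - 1) (hd2 : (n : ℤ) ∣ (l : ℤ) * ((s : ℤ) - 1))
    (huniq : ∀ g : G, ∃! p : Fin k × Fin n, g = x ^ (p.1 : ℕ) * y ^ (p.2 : ℕ))
    (T : List G) (hT : T ≠ [])
    (hTS : T <:+: (List.replicate (k - 1) (List.replicate (n - 1) y ++ [x])).flatten ++
      List.replicate (n - 1) y) :
    (∃ u v : ℕ, T.prod = x ^ u * y ^ v ∧
        ((1 ≤ u ∧ u ≤ k - 1) ∨ (u = 0 ∧ 1 ≤ v ∧ v ≤ n - 1))) ∧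
      T.prod ≠ 1 := by
  obtain ⟨k', rfl⟩ : ∃ k', k = k' + 1 := ⟨k - 1, (Nat.succ_pred_eq_of_pos hk).symm⟩
  simp only [Nat.add_sub_cancel] at hTS ⊢
  -- mod-n reduction of powers of y
  have hymod : ∀ w : ℕ, y ^ w = y ^ (w % n) := by
    intro w
    have hw : y ^ w = y ^ (n * (w / n) + w % n) := by rw [Nat.div_add_mod]
    rw [hw, pow_add, pow_mul, hy, one_pow, one_mul]
  -- uniqueness consequence
  have huniq1 : ∀ u v : ℕ, u < k' + 1 → v < n → x ^ u * y ^ v = 1 → u = 0 ∧ v = 0 := by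
    intro u v hu hv h1
    obtain ⟨p, -, hp⟩ := huniq 1
    have ha := hp (⟨u, hu⟩, ⟨v, hv⟩) h1.symm
    have hb := hp (⟨0, Nat.succ_pos _⟩, ⟨0, hn⟩) (by simp)
    have hab := ha.trans hb.symm
    constructor
    · simpa using congrArg (fun p => ((p.1 : Fin (k'+1)) : ℕ)) hab
    · simpa using congrArg (fun p => ((p.2 : Fin n) : ℕ)) hab
  obtain ⟨P, Q, hPQ⟩ := hTS
  set Sl := (List.replicate k' (List.replicate (n - 1) y ++ [x])).flatten ++
      List.replicate (n - 1) y with hSl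
  have hTlen : 1 ≤ T.length := List.length_pos_iff.mpr hT
  set m1 := P.length with hm1def
  set m2 := P.length + T.length with hm2def
  have hlenS : Sl.length = k' * n + (n - 1) := by
    simp [hSl, Nat.sub_add_cancel hn]
  have hm2 : m2 ≤ k' * n + (n - 1) := by
    have h1 := congrArg List.length hPQ
    simp only [List.length_append] at h1
    rw [hlenS] at h1
    omega
  have hm12 : m1 ≤ m2 := Nat.le_add_right _ _
  have hm1le : m1 ≤ k' * n + (n - 1) := le_trans hm12 hm2
  have hP : Sl.take m1 = P := by
    rw [← hPQ, List.append_assoc, hm1def, List.take_left]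
  have hPT : Sl.take m2 = P ++ T := by
    have : m2 = (P ++ T).length := by simp [hm2def]
    rw [← hPQ, this, List.take_left]
  have e1def := prefix_prod n s hn x y hyx k' m1 hm1le
  have e2def := prefix_prod n s hn x y hyx k' m2 hm2
  rw [hP] at e1def
  rw [hPT, List.prod_append, e1def] at e2def
  set q1 := m1 / n with hq1
  set q2 := m2 / n with hq2
  set r1 := m1 % n with hr1
  set r2 := m2 % n with hr2
  set e1 := Efun n s q1 + r1 with he1
  set e2 := Efun n s q2 + r2 with he2
  have hq12 : q1 ≤ q2 := Nat.div_le_div_right hm12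
  have hq2k : q2 ≤ k' := by
    have hlt : m2 < (k' + 1) * n := by rw [Nat.succ_mul]; omega
    have := (Nat.div_lt_iff_lt_mul hn).mpr hlt
    omega
  set u := q2 - q1 with hu
  -- key computation
  have key : y ^ e1 * T.prod = x ^ u * y ^ e2 := by
    have hx2 : x ^ q2 = x ^ q1 * x ^ u := by rw [← pow_add]; congr 1; omega
    rw [hx2, mul_assoc, mul_assoc] at e2def
    exact mul_left_cancel e2def
  have key2 : T.prod = x ^ u * y ^ (e1 * (n-1) * s ^ u + e2) := by
    have h5 : y ^ (e1 * (n-1)) * (y ^ e1 * T.prod) = y ^ (e1 * (n-1)) * (x ^ u * y ^ e2) := by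
      rw [key]
    rw [← mul_assoc, ← pow_add] at h5
    have h6 : e1 * (n-1) + e1 = n * e1 := by
      have : e1 * (n - 1) + e1 = e1 * (n - 1 + 1) := by ring
      rw [this, Nat.sub_add_cancel hn, mul_comm]
    rw [h6, pow_mul, hy, one_pow, one_mul, ← mul_assoc, pushu x y s hyx,
      mul_assoc, ← pow_add] at h5
    exact h5
  have hr2n : r2 < n := Nat.mod_lt _ hn
  rcases Nat.eq_zero_or_pos u with hu0 | hu1
  · -- u = 0 : q1 = q2, T.prod = y^(r2 - r1)
    have hq12' : q2 = q1 := by omega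
    have hrr : r1 ≤ r2 ∧ r2 - r1 = T.length := by
      have h1 := Nat.div_add_mod m1 n
      have h2 := Nat.div_add_mod m2 n
      rw [← hq1, ← hr1] at h1
      rw [← hq2, ← hr2, hq12'] at h2
      generalize n * q1 = c at h1 h2
      omega
    set v := r2 - r1 with hv
    have hvn : 1 ≤ v ∧ v ≤ n - 1 := by omega
    have hprod : T.prod = x ^ 0 * y ^ v := by
      rw [key2, hu0]
      have he12 : e2 = e1 + v := by rw [he1, he2, hq12']; omega
      have h6 : e1 * (n-1) + e1 = n * e1 := by
        have h : e1 * (n - 1) + e1 = e1 * (n - 1 + 1) := by ring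
        rw [h, Nat.sub_add_cancel hn, mul_comm]
      have hexp : e1 * (n-1) * s ^ 0 + e2 = n * e1 + v := by
        rw [pow_zero, mul_one, he12, ← add_assoc, h6]
      rw [hexp, pow_add, pow_mul, hy, one_pow, one_mul]
    refine ⟨⟨0, v, hprod, Or.inr ⟨rfl, hvn⟩⟩, ?_⟩
    intro hone
    rw [hone] at hprod
    have := huniq1 0 v (Nat.succ_pos _) (by omega) hprod.symm
    omega
  · -- u ≥ 1
    set w := e1 * (n-1) * s ^ u + e2 with hw
    have hprod : T.prod = x ^ u * y ^ (w % n) := by rw [key2, hymod w]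
    have huk : u ≤ k' := le_trans (Nat.sub_le _ _) hq2k
    refine ⟨⟨u, w % n, hprod, Or.inl ⟨hu1, huk⟩⟩, ?_⟩
    intro hone
    rw [hone] at hprod
    have := huniq1 u (w % n) (by omega) (Nat.mod_lt _ hn) hprod.symm
    omega
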